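/- arXiv:1211.4670 — 3 statements merged into one kernel-verified Lean document; each statement's English description precedes it below -/
import Mathlib

section
/- Let x* be weakly Pareto optimal for a multi-objective problem over Ω, and suppose the image Y = F(Ω) satisfies the convex inclusion condition at F(x*), i.e., there exists a convex set H ⊆ ℝᵖ with Y ⊆ H and H ∩ (F(x*) − ℝᵖ₊₊) = ∅. Then there exists a weight λ ≥ 0, λ ≠ 0, such that x* minimizes ∑ᵢ λᵢ Fᵢ(x) over Ω. -/
/-- If `xstar` is weakly Pareto optimal and the image `Y = F(Ω)` satisfies the
convex inclusion condition at `F(xstar)`, then some nonzero nonnegative weight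
vector makes `xstar` a minimizer of the weighted-sum problem. -/
theorem weakly_pareto_imp_weighted_sum_min {n p : ℕ}
    (Ω : Set (Fin n → ℝ)) (F : (Fin n → ℝ) → Fin p → ℝ)
    (xstar : Fin n → ℝ) (hx : xstar ∈ Ω)
    (hweak : ¬ ∃ x ∈ Ω, ∀ i, F x i < F xstar i)
    (H : Set (Fin p → ℝ)) (hconv : Convex ℝ H)
    (hYH : F '' Ω ⊆ H)
    (hdisj : H ∩ {y | ∃ d : Fin p → ℝ, (∀ i, 0 < d i) ∧ y = F xstar - d} = ∅) :
    ∃ lam : Fin p → ℝ, (∀ i, 0 ≤ lam i) ∧ lam ≠ 0 ∧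
      ∀ x ∈ Ω, ∑ i, lam i * F xstar i ≤ ∑ i, lam i * F x i := by
  classical
  set c := F xstar with hc
  -- p = 0 leads to contradiction
  rcases Nat.eq_zero_or_pos p with hp | hp
  · exfalso
    have hcH : c ∈ H := hYH ⟨xstar, hx, rfl⟩
    have : c ∈ H ∩ {y | ∃ d : Fin p → ℝ, (∀ i, 0 < d i) ∧ y = c - d} := by
      refine ⟨hcH, ⟨fun _ => 1, fun i => (Fin.elim0 (hp ▸ i)), ?_⟩⟩
      subst hp; ext i; exact Fin.elim0 i
    rw [hdisj] at this
    exact this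
  set K : Set (Fin p → ℝ) := {y | ∀ i, y i < c i} with hKdef
  have hKeq : K = {y | ∃ d : Fin p → ℝ, (∀ i, 0 < d i) ∧ y = c - d} := by
    ext y
    constructor
    · intro hy
      exact ⟨c - y, fun i => sub_pos.mpr (hy i), by ext i; simp⟩
    · rintro ⟨d, hd, rfl⟩
      intro i
      simpa using hd i
  have hKopen : IsOpen K := by
    have : K = ⋂ i, {y : Fin p → ℝ | y i < c i} := by
      ext y; simp [hKdef]
    rw [this]
    exact isOpen_iInter_of_finite fun i =>
      isOpen_lt (continuous_apply i) continuous_const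
  have hKconv : Convex ℝ K := by
    intro y hy z hz a b ha hb hab
    intro i
    show a * y i + b * z i < c i
    obtain ha' | ha' := eq_or_lt_of_le ha
    · have hb1 : b = 1 := by linarith
      rw [← ha', hb1]; simpa using hz i
    · have h1 := mul_lt_mul_of_pos_left (hy i) ha'
      have h2 := mul_le_mul_of_nonneg_left (hz i).le hb
      have h3 : a * c i + b * c i = c i := by rw [← add_mul, hab, one_mul]
      linarith
  have hdisj' : Disjoint K H := by
    rw [Set.disjoint_left]
    intro y hyK hyH
    have : y ∈ H ∩ {y | ∃ d : Fin p → ℝ, (∀ i, 0 < d i) ∧ y = c - d} :=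
      ⟨hyH, hKeq ▸ hyK⟩
    rw [hdisj] at this
    exact this
  obtain ⟨f, u, hfu, hfH⟩ := geometric_hahn_banach_open hKconv hKopen hconv hdisj'
  set lam : Fin p → ℝ := fun i => f (Pi.single i 1) with hlam
  have hfsum : ∀ y : Fin p → ℝ, f y = ∑ i, lam i * y i := by
    intro y
    have hy : y = ∑ i, y i • (Pi.single i (1 : ℝ) : Fin p → ℝ) := by
      ext j; simp [Pi.single_apply, Finset.sum_ite_eq', mul_comm]
    conv_lhs => rw [hy]
    rw [map_sum]
    congr 1; ext i
    rw [f.map_smul, smul_eq_mul, mul_comm]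
  -- key estimate: for any ε > 0, f (c - ε • d') < u for positive d'
  have hcu : f c ≤ u := by
    have hev : ∀ ε : ℝ, 0 < ε → f (c - ε • (1 : Fin p → ℝ)) < u := by
      intro ε hε
      apply hfu
      intro i
      simp only [Pi.sub_apply, Pi.smul_apply, Pi.one_apply, smul_eq_mul, mul_one]
      linarith
    have hlim : Filter.Tendsto (fun ε : ℝ => f (c - ε • (1 : Fin p → ℝ)))
        (nhdsWithin 0 (Set.Ioi 0)) (nhds (f c)) := by
      have hcont : Continuous fun ε : ℝ => f (c - ε • (1 : Fin p → ℝ)) :=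
        f.continuous.comp (continuous_const.sub (continuous_id.smul continuous_const))
      have := hcont.tendsto 0
      simpa using this.mono_left nhdsWithin_le_nhds
    exact le_of_tendsto hlim (Filter.eventually_of_mem self_mem_nhdsWithin
      fun ε hε => le_of_lt (hev ε hε))
  have hlam_nonneg : ∀ i, 0 ≤ lam i := by
    intro i
    by_contra h
    push_neg at h
    have hni : 0 < -lam i := by linarith
    have hpt : ∀ t : ℝ, 0 ≤ t → (c - 1 - t • (Pi.single i 1 : Fin p → ℝ)) ∈ K := by
      intro t ht j
      by_cases hij : j = i
      · subst hij
        simp only [Pi.sub_apply, Pi.smul_apply, Pi.one_apply, smul_eq_mul,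
          Pi.single_eq_same, mul_one]
        linarith
      · simp [Pi.single_apply, hij]
    have hft : ∀ t : ℝ, 0 ≤ t → f (c - 1) - t * lam i < u := by
      intro t ht
      have := hfu _ (hpt t ht)
      simpa [map_sub, map_smul, hlam] using this
    set A := f (c - 1) with hA
    have ht0 : (0:ℝ) ≤ |u - A| / (-lam i) + 1 := by positivity
    have key : |u - A| / (-lam i) * (-lam i) = |u - A| :=
      div_mul_cancel₀ _ (ne_of_gt hni)
    have := hft _ ht0
    nlinarith [le_abs_self (u - A)]
  have hlam_ne : lam ≠ 0 := by
    intro h0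
    have hf0 : ∀ y, f y = 0 := by
      intro y; rw [hfsum]; simp [h0]
    have h1 : (0:ℝ) < u := by
      have := hfu (c - 1) (fun i => by simp)
      rwa [hf0] at this
    have h2 : u ≤ 0 := by
      have := hfH c (hYH ⟨xstar, hx, rfl⟩)
      rwa [hf0] at this
    linarith
  refine ⟨lam, hlam_nonneg, hlam_ne, fun x hxΩ => ?_⟩
  have h1 : u ≤ f (F x) := hfH _ (hYH ⟨x, hxΩ, rfl⟩)
  have := hcu.trans h1
  rw [hfsum, hfsum] at this
  exact this
end

section
/- The 5 × 5 matrix M with rows (1,1,0,0,1), (1,2,1,0,0), (0,1,2,1,0), (0,0,1,2,1), (1,0,0,1,6) is doubly nonnegative (positive semidefinite with nonnegative entries) but not completely positive. -/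
open Matrix

/-- `B` is completely positive if `B = V * Vᵀ` for some entrywise
nonnegative matrix `V`. -/
def IsCompletelyPositive {n : ℕ} (B : Matrix (Fin n) (Fin n) ℝ) : Prop :=
  ∃ (m : ℕ) (V : Matrix (Fin n) (Fin m) ℝ), (∀ i j, 0 ≤ V i j) ∧ B = V * Vᵀ

/-- The Horn matrix is copositive. -/
lemma horn_copos (y1 y2 y3 y4 y5 : ℝ) (h1 : 0 ≤ y1) (h2 : 0 ≤ y2) (h3 : 0 ≤ y3)
    (h4 : 0 ≤ y4) (h5 : 0 ≤ y5) :
    0 ≤ y1^2+y2^2+y3^2+y4^2+y5^2 - 2*y1*y2 + 2*y1*y3 + 2*y1*y4 - 2*y1*y5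
      - 2*y2*y3 + 2*y2*y4 + 2*y2*y5 - 2*y3*y4 + 2*y3*y5 - 2*y4*y5 := by
  rcases le_total y4 y5 with h | h
  · nlinarith [sq_nonneg (y1-y2+y3+y4-y5), mul_nonneg h2 h4, mul_nonneg h3 (sub_nonneg.2 h)]
  rcases le_total y5 y1 with h' | h'
  · nlinarith [sq_nonneg (y2-y3+y4+y5-y1), mul_nonneg h3 h5, mul_nonneg h4 (sub_nonneg.2 h')]
  rcases le_total y1 y2 with h'' | h''
  · nlinarith [sq_nonneg (y3-y4+y5+y1-y2), mul_nonneg h4 h1, mul_nonneg h5 (sub_nonneg.2 h'')]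
  rcases le_total y2 y3 with h''' | h'''
  · nlinarith [sq_nonneg (y4-y5+y1+y2-y3), mul_nonneg h5 h2, mul_nonneg h1 (sub_nonneg.2 h''')]
  · have hc : y3 ≤ y4 := le_trans h''' (le_trans h'' (le_trans h' h))
    nlinarith [sq_nonneg (y5-y1+y2+y3-y4), mul_nonneg h1 h3, mul_nonneg h2 (sub_nonneg.2 hc)]

lemma diananda_not_cp : ¬ IsCompletelyPositive
    !![(1:ℝ),1,0,0,1; 1,2,1,0,0; 0,1,2,1,0; 0,0,1,2,1; 1,0,0,1,6] := by
  rintro ⟨m, V, hV, hB⟩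
  have hM : ∀ a b : Fin 5,
      !![(1:ℝ),1,0,0,1; 1,2,1,0,0; 0,1,2,1,0; 0,0,1,2,1; 1,0,0,1,6] a b
        = ∑ k, V a k * V b k := by
    intro a b; rw [hB]; simp [Matrix.mul_apply]
  have hpos : 0 ≤ ∑ k : Fin m, ((13*V 0 k)^2+(10*V 1 k)^2+(7*V 2 k)^2+(5*V 3 k)^2+(3*V 4 k)^2
      - 2*(13*V 0 k)*(10*V 1 k) + 2*(13*V 0 k)*(7*V 2 k) + 2*(13*V 0 k)*(5*V 3 k)
      - 2*(13*V 0 k)*(3*V 4 k) - 2*(10*V 1 k)*(7*V 2 k) + 2*(10*V 1 k)*(5*V 3 k)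
      + 2*(10*V 1 k)*(3*V 4 k) - 2*(7*V 2 k)*(5*V 3 k) + 2*(7*V 2 k)*(3*V 4 k)
      - 2*(5*V 3 k)*(3*V 4 k)) :=
    Finset.sum_nonneg fun k _ => horn_copos _ _ _ _ _
      (mul_nonneg (by norm_num) (hV 0 k)) (mul_nonneg (by norm_num) (hV 1 k))
      (mul_nonneg (by norm_num) (hV 2 k)) (mul_nonneg (by norm_num) (hV 3 k))
      (mul_nonneg (by norm_num) (hV 4 k))
  have hval : ∑ k : Fin m, ((13*V 0 k)^2+(10*V 1 k)^2+(7*V 2 k)^2+(5*V 3 k)^2+(3*V 4 k)^2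
      - 2*(13*V 0 k)*(10*V 1 k) + 2*(13*V 0 k)*(7*V 2 k) + 2*(13*V 0 k)*(5*V 3 k)
      - 2*(13*V 0 k)*(3*V 4 k) - 2*(10*V 1 k)*(7*V 2 k) + 2*(10*V 1 k)*(5*V 3 k)
      + 2*(10*V 1 k)*(3*V 4 k) - 2*(7*V 2 k)*(5*V 3 k) + 2*(7*V 2 k)*(3*V 4 k)
      - 2*(5*V 3 k)*(3*V 4 k)) = -7 := by
    calc ∑ k : Fin m, ((13*V 0 k)^2+(10*V 1 k)^2+(7*V 2 k)^2+(5*V 3 k)^2+(3*V 4 k)^2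
          - 2*(13*V 0 k)*(10*V 1 k) + 2*(13*V 0 k)*(7*V 2 k) + 2*(13*V 0 k)*(5*V 3 k)
          - 2*(13*V 0 k)*(3*V 4 k) - 2*(10*V 1 k)*(7*V 2 k) + 2*(10*V 1 k)*(5*V 3 k)
          + 2*(10*V 1 k)*(3*V 4 k) - 2*(7*V 2 k)*(5*V 3 k) + 2*(7*V 2 k)*(3*V 4 k)
          - 2*(5*V 3 k)*(3*V 4 k))
        = ∑ k : Fin m, (169*(V 0 k * V 0 k) + 100*(V 1 k * V 1 k) + 49*(V 2 k * V 2 k)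
            + 25*(V 3 k * V 3 k) + 9*(V 4 k * V 4 k) + (-260)*(V 0 k * V 1 k)
            + 182*(V 0 k * V 2 k) + 130*(V 0 k * V 3 k) + (-78)*(V 0 k * V 4 k)
            + (-140)*(V 1 k * V 2 k) + 100*(V 1 k * V 3 k) + 60*(V 1 k * V 4 k)
            + (-70)*(V 2 k * V 3 k) + 42*(V 2 k * V 4 k) + (-30)*(V 3 k * V 4 k)) :=
          Finset.sum_congr rfl fun k _ => by ring
      _ = 169*(∑ k : Fin m, V 0 k * V 0 k) + 100*(∑ k : Fin m, V 1 k * V 1 k)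
            + 49*(∑ k : Fin m, V 2 k * V 2 k) + 25*(∑ k : Fin m, V 3 k * V 3 k)
            + 9*(∑ k : Fin m, V 4 k * V 4 k) + (-260)*(∑ k : Fin m, V 0 k * V 1 k)
            + 182*(∑ k : Fin m, V 0 k * V 2 k) + 130*(∑ k : Fin m, V 0 k * V 3 k)
            + (-78)*(∑ k : Fin m, V 0 k * V 4 k) + (-140)*(∑ k : Fin m, V 1 k * V 2 k)
            + 100*(∑ k : Fin m, V 1 k * V 3 k) + 60*(∑ k : Fin m, V 1 k * V 4 k)
            + (-70)*(∑ k : Fin m, V 2 k * V 3 k) + 42*(∑ k : Fin m, V 2 k * V 4 k)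
            + (-30)*(∑ k : Fin m, V 3 k * V 4 k) := by
          simp only [Finset.sum_add_distrib, Finset.mul_sum]
      _ = -7 := by
          rw [← hM 0 0, ← hM 1 1, ← hM 2 2, ← hM 3 3, ← hM 4 4, ← hM 0 1, ← hM 0 2,
            ← hM 0 3, ← hM 0 4, ← hM 1 2, ← hM 1 3, ← hM 1 4, ← hM 2 3, ← hM 2 4, ← hM 3 4]
          simp [vecHead, vecTail, Fin.succ]; norm_num
  rw [hval] at hpos
  linarith

/-- Diananda's counterexample: a 5×5 doubly nonnegative matrix which is not
completely positive. -/
theorem diananda_counterexample :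
    (!![(1:ℝ),1,0,0,1; 1,2,1,0,0; 0,1,2,1,0; 0,0,1,2,1; 1,0,0,1,6]).PosSemidef ∧
    (∀ i j, 0 ≤ !![(1:ℝ),1,0,0,1; 1,2,1,0,0; 0,1,2,1,0; 0,0,1,2,1; 1,0,0,1,6] i j) ∧
    ¬ IsCompletelyPositive
      !![(1:ℝ),1,0,0,1; 1,2,1,0,0; 0,1,2,1,0; 0,0,1,2,1; 1,0,0,1,6] := by
  refine ⟨posSemidef_iff_dotProduct_mulVec.mpr ⟨?_, ?_⟩, ?_, diananda_not_cp⟩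
  · ext i j
    rw [conjTranspose_apply]
    fin_cases i <;> fin_cases j <;> simp [vecHead, vecTail]
  · intro x
    have e : star x = x := rfl
    rw [e]
    simp [dotProduct, mulVec, Fin.sum_univ_five, vecHead, vecTail]
    nlinarith [sq_nonneg (x 0 + x 1 + x 4), sq_nonneg (x 1 + x 2 - x 4),
      sq_nonneg (x 2 + x 3 + x 4), sq_nonneg (x 3), sq_nonneg (x 4)]
  · intro i j; fin_cases i <;> fin_cases j <;> norm_num [vecHead, vecTail]
end

section
/- If the multi-objective problem is convex (each Fᵢ convex and Ω convex) and x* is weakly Pareto optimal, then there exists λ ≥ 0, λ ≠ 0, such that x* minimizes ∑ᵢ λᵢ Fᵢ over Ω. -/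
/-- Scalarization for convex multi-objective problems: if `Ω` is convex, each
`Fᵢ` is convex, and `xstar` is weakly Pareto optimal, then there exists a
nonzero nonnegative weight vector `λ` such that `xstar` minimizes
`∑ i, λ i * Fᵢ` over `Ω`. -/
theorem convex_weakly_pareto_scalarization {n p : ℕ} (hp : 0 < p)
    (Ω : Set (Fin n → ℝ)) (hΩ : Convex ℝ Ω)
    (F : Fin p → (Fin n → ℝ) → ℝ) (hF : ∀ i, ConvexOn ℝ Set.univ (F i))
    (xstar : Fin n → ℝ) (hx : xstar ∈ Ω)
    (hweak : ¬ ∃ x ∈ Ω, ∀ i, F i x < F i xstar) :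
    ∃ lam : Fin p → ℝ, (∀ i, 0 ≤ lam i) ∧ lam ≠ 0 ∧
      ∀ x ∈ Ω, ∑ i, lam i * F i xstar ≤ ∑ i, lam i * F i x := by
  classical
  set A : Set (Fin p → ℝ) := {y | ∃ x ∈ Ω, ∀ i, F i x < F i xstar + y i} with hA
  have hAopen : IsOpen A := by
    have : A = ⋃ x ∈ Ω, {y : Fin p → ℝ | ∀ i, F i x < F i xstar + y i} := by
      ext y; simp [hA]
    rw [this]
    refine isOpen_biUnion fun x _ => ?_
    have : {y : Fin p → ℝ | ∀ i, F i x < F i xstar + y i}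
        = ⋂ i, {y : Fin p → ℝ | F i x - F i xstar < y i} := by
      ext y; simp [sub_lt_iff_lt_add']
    rw [this]
    exact isOpen_iInter_of_finite fun i =>
      isOpen_lt continuous_const (continuous_apply i)
  have hAconv : Convex ℝ A := by
    rintro y₁ ⟨x₁, hx₁, hy₁⟩ y₂ ⟨x₂, hx₂, hy₂⟩ a b ha hb hab
    refine ⟨a • x₁ + b • x₂, hΩ hx₁ hx₂ ha hb hab, fun i => ?ic⟩
    have h1 : F i (a • x₁ + b • x₂) ≤ a * F i x₁ + b * F i x₂ :=
      (hF i).2 (Set.mem_univ x₁) (Set.mem_univ x₂) ha hb hab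
    have h2 : a * F i x₁ + b * F i x₂
        < a * (F i xstar + y₁ i) + b * (F i xstar + y₂ i) := by
      rcases eq_or_lt_of_le ha with h | h
      · have hb' : b = 1 := by linarith
        simp only [← h, hb', zero_mul, one_mul, zero_add]
        exact hy₂ i
      · rcases eq_or_lt_of_le hb with h' | h'
        · simp only [← h', zero_mul, add_zero]
          exact mul_lt_mul_of_pos_left (hy₁ i) h
        · exact add_lt_add (mul_lt_mul_of_pos_left (hy₁ i) h)
            (mul_lt_mul_of_pos_left (hy₂ i) h')
    have : F i (a • x₁ + b • x₂) < a * (F i xstar + y₁ i) + b * (F i xstar + y₂ i) :=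
      lt_of_le_of_lt h1 h2
    calc F i (a • x₁ + b • x₂) < a * (F i xstar + y₁ i) + b * (F i xstar + y₂ i) := this
      _ = F i xstar + (a • y₁ + b • y₂) i := by
          simp only [Pi.add_apply, Pi.smul_apply, smul_eq_mul]
          linear_combination F i xstar * hab
  have h0 : (0 : Fin p → ℝ) ∉ A := by
    rintro ⟨x, hxΩ, hlt⟩
    exact hweak ⟨x, hxΩ, fun i => by simpa using hlt i⟩
  obtain ⟨f, hf⟩ := geometric_hahn_banach_open_point hAconv hAopen h0
  simp only [map_zero] at hf
  set lam : Fin p → ℝ := fun i => -f (fun j => if i = j then 1 else 0) with hlam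
  have key : ∀ y : Fin p → ℝ, f y = -∑ i, y i * lam i := by
    intro y
    have := LinearMap.pi_apply_eq_sum_univ (f : (Fin p → ℝ) →ₗ[ℝ] ℝ) y
    simp only [ContinuousLinearMap.coe_coe] at this
    rw [this]
    simp [hlam, mul_neg, Finset.sum_neg_distrib, smul_eq_mul]
  -- membership of shifted vectors
  have hmem : ∀ x ∈ Ω, ∀ ε : ℝ, 0 < ε →
      (fun i => F i x - F i xstar + ε) ∈ A := by
    intro x hxΩ ε hε
    exact ⟨x, hxΩ, fun i => by dsimp only; linarith⟩
  -- positivity of ∑ λᵢ yᵢ on A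
  have hpos : ∀ y ∈ A, 0 < ∑ i, y i * lam i := by
    intro y hy
    have := hf y hy
    rw [key] at this
    linarith
  have hnn : ∀ i, 0 ≤ lam i := by
    intro i
    by_contra hneg
    push_neg at hneg
    -- take y = (F xstar shift) with x = xstar, ε = 1, then add t in coordinate i
    have hy1 : ∀ t : ℝ, 0 ≤ t →
        ((fun j => F j xstar - F j xstar + 1) + t • fun j => if j = i then (1:ℝ) else 0) ∈ A := by
      intro t ht
      refine ⟨xstar, hx, fun j => ?_⟩
      simp only [Pi.add_apply, Pi.smul_apply, smul_eq_mul]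
      have : 0 ≤ t * (if j = i then (1:ℝ) else 0) := by positivity
      linarith
    set c : ℝ := ∑ j, ((fun j => F j xstar - F j xstar + 1) j) * lam j with hc
    have hbig : ∀ t : ℝ, 0 ≤ t → 0 < c + t * lam i := by
      intro t ht
      have := hpos _ (hy1 t ht)
      have heq : ∑ j, (((fun j => F j xstar - F j xstar + 1) + t • fun j => if j = i then (1:ℝ) else 0) j) * lam j
          = c + t * lam i := by
        simp only [Pi.add_apply, Pi.smul_apply, smul_eq_mul, add_mul, Finset.sum_add_distrib, hc]
        congr 1
        rw [Finset.sum_eq_single i]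
        · simp
        · intro j _ hj; simp [hj]
        · simp
      rw [heq] at this
      exact this
    have hc0 : 0 < c := by simpa using hbig 0 le_rfl
    have hli : (0:ℝ) < -lam i := by linarith
    have := hbig ((c + 1) / (-lam i)) (div_nonneg (by linarith) (by linarith))
    have ht : (c + 1) / (-lam i) * lam i = -(c + 1) := by
      field_simp; simp [hneg.ne]
    linarith
  have hne : lam ≠ 0 := by
    intro h
    have := hpos _ (hmem xstar hx 1 one_pos)
    simp [h] at this
  refine ⟨lam, hnn, hne, fun x hxΩ => ?_⟩
  -- for all ε > 0, ∑ λᵢ (Fᵢ x - Fᵢ x* + ε) > 0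
  have hε : ∀ ε : ℝ, 0 < ε →
      0 < ∑ i, (F i x - F i xstar + ε) * lam i := fun ε h => hpos _ (hmem x hxΩ ε h)
  have hlim : 0 ≤ ∑ i, (F i x - F i xstar) * lam i := by
    by_contra hneg
    push_neg at hneg
    set S := ∑ i, (F i x - F i xstar) * lam i with hS
    set L := ∑ i, lam i with hL
    have hLnn : 0 ≤ L := Finset.sum_nonneg fun i _ => hnn i
    have expand : ∀ ε : ℝ, ∑ i, (F i x - F i xstar + ε) * lam i = S + ε * L := by
      intro ε
      simp only [add_mul, Finset.sum_add_distrib, hS, hL, Finset.mul_sum]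
    rcases eq_or_lt_of_le hLnn with h | h
    · have := hε 1 one_pos
      rw [expand] at this
      rw [← h] at this
      linarith
    · have := hε (-S / (2 * L)) (div_pos (by linarith) (by linarith))
      rw [expand] at this
      have ht : -S / (2 * L) * L = -S / 2 := by
        field_simp
      linarith
  have : ∑ i, (F i x - F i xstar) * lam i
      = ∑ i, lam i * F i x - ∑ i, lam i * F i xstar := by
    rw [← Finset.sum_sub_distrib]
    exact Finset.sum_congr rfl fun i _ => by ring
  linarith [this ▸ hlim]
end
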